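/- For κ = 1/2 (Weyl ordering) and complex conjugation C with Cλ = λ: if CB = B then the Fedosov element satisfies Cr = r, the Fedosov derivation commutes with C, and the star product is Hermitian: C(f ★ g) = (Cg) ★ (Cf) for all f, g ∈ C^∞(E*)[[λ]]. -/
import Mathlib


/-- for the Weyl-ordered (κ = 1/2) Fedosov construction with
`CB = B` (complex conjugation `C`, `Cλ = λ`): the Fedosov element satisfies
`Cr = r`, the Fedosov derivation `-δ + D + (i/λ)ad(r)` commutes with `C`, and
the resulting star product is Hermitian, `C(f ★ g) = (Cg) ★ (Cf)`.
Abstract formulation: `Cw`/`Cs` are involutive antilinear maps on the Fedosov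
algebra `W` and the symbol space `S` compatible with all the structure maps
(`δ`, `δ⁻¹`, `D`, the quadratic term `Q = (i/λ)(·∘·)` with
`C(Q a b) = Q (Cb) (Ca)`, the operator `ad = (i/λ)ad(·)(·)`, the fibrewise
Weyl product with `C(a∘b) = (Cb)∘(Ca)`, `ι` and `σ`), `r` the unique solution
of the Fedosov equations and `τ` the Fedosov–Taylor series; the star product is
`f ★ g = σ(τ(f) ∘ τ(g))`. -/
theorem stmt15 (W S : Type*) [AddCommGroup W] [Module ℂ W]
    [AddCommGroup S] [Module ℂ S]
    (Cw : W →+ W) (Cs : S →+ S)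
    (hCw2 : ∀ a, Cw (Cw a) = a) (hCs2 : ∀ s, Cs (Cs s) = s)
    (hCwsmul : ∀ (c : ℂ) (a : W), Cw (c • a) = (starRingEnd ℂ) c • Cw a)
    (hCssmul : ∀ (c : ℂ) (s : S), Cs (c • s) = (starRingEnd ℂ) c • Cs s)
    (δ δinv Dop : W →ₗ[ℂ] W)
    (Q adW mulW : W →ₗ[ℂ] W →ₗ[ℂ] W)
    (ι : S →ₗ[ℂ] W) (σp : W →ₗ[ℂ] S)
    (τ : S →ₗ[ℂ] W) (R B r : W)
    -- the Fedosov equations and their unique solvability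
    (hr : δ r = Dop r + Q r r - R + B) (hrinv : δinv r = 0)
    (huniq : ∀ a : W, δ a = Dop a + Q a a - R + B → δinv a = 0 → a = r)
    -- conjugation compatibilities
    (hCδ : ∀ a, Cw (δ a) = δ (Cw a)) (hCδinv : ∀ a, Cw (δinv a) = δinv (Cw a))
    (hCD : ∀ a, Cw (Dop a) = Dop (Cw a))
    (hCQ : ∀ a b, Cw (Q a b) = Q (Cw b) (Cw a))
    (hCR : Cw R = R) (hCB : Cw B = B)
    (hCad : ∀ x a, Cw (adW x a) = adW (Cw x) (Cw a))
    (hCmul : ∀ a b, Cw (mulW a b) = mulW (Cw b) (Cw a))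
    (hCι : ∀ s, Cw (ι s) = ι (Cs s)) (hCσ : ∀ a, Cs (σp a) = σp (Cw a))
    -- the Fedosov–Taylor series
    (hτ : ∀ s : S, τ s = ι s + δinv (Dop (τ s) + adW r (τ s)))
    (hτuniq : ∀ (s : S) (a : W), a = ι s + δinv (Dop a + adW r a) → a = τ s) :
    Cw r = r ∧
    (∀ a : W, Cw (-δ a + Dop a + adW r a) =
      -δ (Cw a) + Dop (Cw a) + adW r (Cw a)) ∧
    (∀ f g : S, Cs (σp (mulW (τ f) (τ g))) =
      σp (mulW (τ (Cs g)) (τ (Cs f)))) := by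
  have hCr : Cw r = r := by
    apply huniq
    · rw [← hCδ, hr]
      simp only [map_add, map_sub, hCD, hCQ, hCR, hCB]
    · rw [← hCδinv, hrinv, map_zero]
  have hCτ : ∀ s : S, Cw (τ s) = τ (Cs s) := by
    intro s
    apply hτuniq
    conv_lhs => rw [hτ s]
    rw [map_add, hCι, hCδinv, map_add, hCD, hCad, hCr]
  refine ⟨hCr, ?_, ?_⟩
  · intro a
    simp only [map_add, map_neg, hCδ, hCD, hCad, hCr]
  · intro f g
    rw [hCσ, hCmul, hCτ, hCτ]
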